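/- arXiv:2202.12697 — 2 statements merged into one kernel-verified Lean document; each statement's English description precedes it below -/
import Mathlib

section
/- For all parameters A, B, C ∈ ℂ with (C;q)_n ≠ 0 for all n (so in particular qC satisfies the same condition away from its first factor), all y ∈ ℂ with |y| < 1, and all x ∈ ℂ with 0 < |x| < 1, one has (1−C)·Φ₁(A,B;C;q,q₁;x,xy) = (1−C)·Φ₁(A,B;qC;q,q₁;x,xy) + (1−q)·C·x·(D_q h)(x), where h is the function x ↦ Φ₁(A,B;qC;q,q₁;x,xy) (with y fixed) and D_q is the Jackson q-derivative with base q. (Equation (2.23), with C playing the role of q^{c−1}; note |xy| < 1 since |x| < 1 and |y| < 1.) -/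
open Complex Filter

/-- The q-shifted factorial (z;q)_n = prod_{r=0}^{n-1} (1 - z q^r). -/
noncomputable def qPoch (q z : ℂ) (n : ℕ) : ℂ :=
  ∏ r ∈ Finset.range n, (1 - z * q ^ r)

/-- The bibasic Humbert hypergeometric function Φ₁ on two independent bases q and q₁. -/
noncomputable def Phi1 (q q1 A B C x y : ℂ) : ℂ :=
  ∑' p : ℕ × ℕ,
    qPoch q A (p.1 + p.2) * qPoch q1 B p.1 /
      (qPoch q C (p.1 + p.2) * qPoch q1 q1 p.1 * qPoch q q p.2) * x ^ p.1 * y ^ p.2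

/-- The Jackson p-derivative. -/
noncomputable def jackson (p : ℂ) (f : ℂ → ℂ) (x : ℂ) : ℂ :=
  (f x - f (p * x)) / ((1 - p) * x)

lemma qPoch_succ (q z : ℂ) (n : ℕ) :
    qPoch q z (n+1) = qPoch q z n * (1 - z * q ^ n) := Finset.prod_range_succ _ n

lemma qPoch_shift (q z : ℂ) (n : ℕ) :
    qPoch q z (n+1) = (1 - z) * qPoch q (q*z) n := by
  rw [qPoch, Finset.prod_range_succ', qPoch]
  rw [mul_comm]
  congr 1
  · norm_num
  · exact Finset.prod_congr rfl fun r _ => by ring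

lemma qPoch_ne_zero_of_lt (p z : ℂ) (h : ∀ r : ℕ, ‖z * p ^ r‖ < 1) (n : ℕ) :
    qPoch p z n ≠ 0 := by
  refine Finset.prod_ne_zero_iff.2 fun r _ => ?_
  intro hr
  have : z * p ^ r = 1 := by linear_combination -hr
  simpa [this] using h r

lemma geom_partial_le {a : ℝ} (h0 : 0 ≤ a) (h1 : a < 1) (n : ℕ) :
    ∑ r ∈ Finset.range n, a ^ r ≤ (1 - a)⁻¹ := by
  rw [← tsum_geometric_of_lt_one h0 h1]
  exact Summable.sum_le_tsum _ (fun i _ => pow_nonneg h0 i) (summable_geometric_of_lt_one h0 h1)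

lemma qPoch_upper (p z : ℂ) (hp : ‖p‖ < 1) (n : ℕ) :
    ‖qPoch p z n‖ ≤ Real.exp (‖z‖ * (1 - ‖p‖)⁻¹) := by
  have hp0 : (0:ℝ) ≤ ‖p‖ := norm_nonneg _
  calc ‖qPoch p z n‖ = ∏ r ∈ Finset.range n, ‖1 - z * p ^ r‖ := by
        rw [qPoch]; exact norm_prod _ _
    _ ≤ ∏ r ∈ Finset.range n, Real.exp (‖z‖ * ‖p‖ ^ r) := by
        refine Finset.prod_le_prod (fun r _ => norm_nonneg _) (fun r _ => ?_)
        calc ‖1 - z * p ^ r‖ ≤ ‖(1:ℂ)‖ + ‖z * p ^ r‖ := norm_sub_le _ _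
          _ = ‖z‖ * ‖p‖ ^ r + 1 := by simp [norm_mul, norm_pow]; ring
          _ ≤ Real.exp (‖z‖ * ‖p‖ ^ r) := Real.add_one_le_exp _
    _ = Real.exp (∑ r ∈ Finset.range n, ‖z‖ * ‖p‖ ^ r) := (Real.exp_sum _ _).symm
    _ ≤ Real.exp (‖z‖ * (1 - ‖p‖)⁻¹) := by
        apply Real.exp_le_exp.2
        rw [← Finset.mul_sum]
        calc ‖z‖ * ∑ r ∈ Finset.range n, ‖p‖ ^ r ≤ ‖z‖ * (1 - ‖p‖)⁻¹ :=
          mul_le_mul_of_nonneg_left (geom_partial_le hp0 hp n) (norm_nonneg _)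

lemma weierstrass_ineq (t : ℕ → ℝ) (s : Finset ℕ) (h0 : ∀ r ∈ s, 0 ≤ t r)
    (h1 : ∀ r ∈ s, t r ≤ 1) :
    1 - ∑ r ∈ s, t r ≤ ∏ r ∈ s, (1 - t r) := by
  induction s using Finset.induction with
  | empty => simp
  | insert _ _ hmem ih =>
    rename_i a s
    rw [Finset.sum_insert hmem, Finset.prod_insert hmem]
    have ha0 := h0 a (Finset.mem_insert_self a s)
    have ha1 := h1 a (Finset.mem_insert_self a s)
    have ih' := ih (fun r hr => h0 r (Finset.mem_insert_of_mem hr))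
      (fun r hr => h1 r (Finset.mem_insert_of_mem hr))
    have hs0 : 0 ≤ ∑ r ∈ s, t r := Finset.sum_nonneg fun r hr => h0 r (Finset.mem_insert_of_mem hr)
    nlinarith [mul_le_mul_of_nonneg_left ih' (by linarith : (0:ℝ) ≤ 1 - t a)]

lemma qPoch_lower (p z : ℂ) (hp : ‖p‖ < 1) (hz : ∀ n, qPoch p z n ≠ 0) :
    ∃ c : ℝ, 0 < c ∧ ∀ n, c ≤ ‖qPoch p z n‖ := by
  have hp0 : (0:ℝ) ≤ ‖p‖ := norm_nonneg _
  have hip : (1:ℝ) ≤ (1 - ‖p‖)⁻¹ := by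
    rw [le_inv_comm₀] <;> nlinarith
  -- find N with small tail
  have htend : Tendsto (fun N : ℕ => ‖z‖ * (1 - ‖p‖)⁻¹ * ‖p‖ ^ N) atTop (nhds 0) := by
    simpa using (tendsto_pow_atTop_nhds_zero_of_lt_one hp0 hp).const_mul (‖z‖ * (1 - ‖p‖)⁻¹)
  obtain ⟨N, hN⟩ := (htend.eventually (gt_mem_nhds (by norm_num : (0:ℝ) < 1/2))).exists
  -- bound for n ≥ N
  have key : ∀ n, N ≤ n → ‖qPoch p z N‖ * (1/2) ≤ ‖qPoch p z n‖ := by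
    intro n hn
    have hsplit : qPoch p z n = qPoch p z N * ∏ r ∈ Finset.Ico N n, (1 - z * p ^ r) := by
      rw [qPoch, qPoch, Finset.range_eq_Ico]
      rw [Finset.range_eq_Ico]
      exact (Finset.prod_Ico_consecutive (fun r => 1 - z * p ^ r) (Nat.zero_le N) hn).symm
    rw [hsplit, norm_mul]
    apply mul_le_mul_of_nonneg_left _ (norm_nonneg _)
    have ht : ∀ r ∈ Finset.Ico N n, ‖z‖ * ‖p‖ ^ r ≤ ‖z‖ * (1 - ‖p‖)⁻¹ * ‖p‖ ^ N := by
      intro r hr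
      have h1' : ‖p‖ ^ r ≤ ‖p‖ ^ N := pow_le_pow_of_le_one hp0 hp.le (Finset.mem_Ico.1 hr).1
      nlinarith [mul_le_mul_of_nonneg_left h1' (norm_nonneg z),
        mul_le_mul_of_nonneg_left hip (mul_nonneg (norm_nonneg z) (pow_nonneg hp0 N))]
    have hsum : ∑ r ∈ Finset.Ico N n, ‖z‖ * ‖p‖ ^ r ≤ 1/2 := by
      rw [Finset.sum_Ico_eq_sum_range]
      have : ∀ j, ‖z‖ * ‖p‖ ^ (N + j) = (‖z‖ * ‖p‖ ^ N) * ‖p‖ ^ j := by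
        intro j; rw [pow_add]; ring
      simp_rw [this]
      rw [← Finset.mul_sum]
      calc (‖z‖ * ‖p‖ ^ N) * ∑ j ∈ Finset.range (n - N), ‖p‖ ^ j
          ≤ (‖z‖ * ‖p‖ ^ N) * (1 - ‖p‖)⁻¹ :=
            mul_le_mul_of_nonneg_left (geom_partial_le hp0 hp _)
              (mul_nonneg (norm_nonneg _) (pow_nonneg hp0 _))
        _ = ‖z‖ * (1 - ‖p‖)⁻¹ * ‖p‖ ^ N := by ring
        _ ≤ 1/2 := hN.le
    calc (1:ℝ)/2 ≤ 1 - ∑ r ∈ Finset.Ico N n, ‖z‖ * ‖p‖ ^ r := by linarith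
      _ ≤ ∏ r ∈ Finset.Ico N n, (1 - ‖z‖ * ‖p‖ ^ r) := by
          refine weierstrass_ineq _ _ (fun r hr => ?_) (fun r hr => ?_)
          · exact mul_nonneg (norm_nonneg _) (pow_nonneg hp0 _)
          · linarith [ht r hr]
      _ ≤ ∏ r ∈ Finset.Ico N n, ‖1 - z * p ^ r‖ := by
          refine Finset.prod_le_prod (fun r hr => by linarith [ht r hr]) (fun r hr => ?_)
          calc 1 - ‖z‖ * ‖p‖ ^ r = ‖(1:ℂ)‖ - ‖z * p ^ r‖ := by simp [norm_mul, norm_pow]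
            _ ≤ ‖1 - z * p ^ r‖ := norm_sub_norm_le _ _
      _ = ‖∏ r ∈ Finset.Ico N n, (1 - z * p ^ r)‖ := (norm_prod _ _).symm
  -- take min over n ≤ N
  set S := (Finset.range (N+1)).image fun n => ‖qPoch p z n‖ with hS
  have hSne : S.Nonempty := (Finset.nonempty_range_iff.2 (Nat.succ_ne_zero N)).image _
  set m := S.min' hSne with hm
  have hm0 : 0 < m := by
    obtain ⟨n0, _, hn0⟩ := Finset.mem_image.1 (S.min'_mem hSne)
    rw [hm, ← hn0]
    exact norm_pos_iff.2 (hz n0)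
  refine ⟨m/2, by linarith, fun n => ?_⟩
  rcases le_or_gt n N with h | h
  · have : m ≤ ‖qPoch p z n‖ :=
      S.min'_le _ (Finset.mem_image_of_mem _ (Finset.mem_range.2 (Nat.lt_succ_of_le h)))
    linarith
  · have h1 : m ≤ ‖qPoch p z N‖ :=
      S.min'_le _ (Finset.mem_image_of_mem _ (Finset.mem_range.2 (Nat.lt_succ_self N)))
    have := key n h.le
    nlinarith

lemma qPoch_base_ne_zero {p : ℂ} (hp : ‖p‖ < 1) (n : ℕ) : qPoch p p n ≠ 0 := by
  refine qPoch_ne_zero_of_lt p p (fun r => ?_) n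
  rw [norm_mul, norm_pow]
  calc ‖p‖ * ‖p‖ ^ r ≤ ‖p‖ * 1 :=
        mul_le_mul_of_nonneg_left (pow_le_one₀ (norm_nonneg _) hp.le) (norm_nonneg _)
    _ = ‖p‖ := mul_one _
    _ < 1 := hp

lemma phi1_summable (q q1 A B C x y : ℂ) (hq : ‖q‖ < 1) (hq1 : ‖q1‖ < 1)
    (hC : ∀ n, qPoch q C n ≠ 0) (hx : ‖x‖ < 1) (hy : ‖y‖ < 1) :
    Summable (fun p : ℕ × ℕ => qPoch q A (p.1 + p.2) * qPoch q1 B p.1 /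
      (qPoch q C (p.1 + p.2) * qPoch q1 q1 p.1 * qPoch q q p.2) * x ^ p.1 * y ^ p.2) := by
  obtain ⟨c1, hc1, hC1⟩ := qPoch_lower q C hq hC
  obtain ⟨c2, hc2, hC2⟩ := qPoch_lower q1 q1 hq1 (qPoch_base_ne_zero hq1)
  obtain ⟨c3, hc3, hC3⟩ := qPoch_lower q q hq (qPoch_base_ne_zero hq)
  set MA := Real.exp (‖A‖ * (1 - ‖q‖)⁻¹) with hMA
  set MB := Real.exp (‖B‖ * (1 - ‖q1‖)⁻¹) with hMB
  have hMA0 : 0 < MA := Real.exp_pos _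
  have hMB0 : 0 < MB := Real.exp_pos _
  have hg : Summable (fun p : ℕ × ℕ => (MA * MB / (c1 * c2 * c3)) * (‖x‖ ^ p.1 * ‖y‖ ^ p.2)) := by
    refine Summable.mul_left _ ?_
    exact (summable_geometric_of_lt_one (norm_nonneg x) hx).mul_of_nonneg
      (summable_geometric_of_lt_one (norm_nonneg y) hy)
      (fun n => pow_nonneg (norm_nonneg x) n) (fun n => pow_nonneg (norm_nonneg y) n)
  refine Summable.of_norm_bounded hg (fun p => ?_)
  have h1 := qPoch_upper q A hq (p.1 + p.2)
  have h2 := qPoch_upper q1 B hq1 p.1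
  have h3 := hC1 (p.1 + p.2)
  have h4 := hC2 p.1
  have h5 := hC3 p.2
  have hnorm : ‖qPoch q A (p.1 + p.2) * qPoch q1 B p.1 /
      (qPoch q C (p.1 + p.2) * qPoch q1 q1 p.1 * qPoch q q p.2) * x ^ p.1 * y ^ p.2‖
      = ‖qPoch q A (p.1 + p.2)‖ * ‖qPoch q1 B p.1‖ /
      (‖qPoch q C (p.1 + p.2)‖ * ‖qPoch q1 q1 p.1‖ * ‖qPoch q q p.2‖) * ‖x‖ ^ p.1 * ‖y‖ ^ p.2 := by
    simp [norm_mul, norm_div, norm_pow]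
  rw [hnorm]
  calc ‖qPoch q A (p.1 + p.2)‖ * ‖qPoch q1 B p.1‖ /
      (‖qPoch q C (p.1 + p.2)‖ * ‖qPoch q1 q1 p.1‖ * ‖qPoch q q p.2‖) * ‖x‖ ^ p.1 * ‖y‖ ^ p.2
      = ‖qPoch q A (p.1 + p.2)‖ * ‖qPoch q1 B p.1‖ /
      (‖qPoch q C (p.1 + p.2)‖ * ‖qPoch q1 q1 p.1‖ * ‖qPoch q q p.2‖) * (‖x‖ ^ p.1 * ‖y‖ ^ p.2) := by
        ring
    _ ≤ (MA * MB / (c1 * c2 * c3)) * (‖x‖ ^ p.1 * ‖y‖ ^ p.2) := by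
        have hx0 : (0:ℝ) ≤ ‖x‖ ^ p.1 * ‖y‖ ^ p.2 := by positivity
        refine mul_le_mul_of_nonneg_right ?_ hx0
        refine div_le_div₀ ?_ ?_ ?_ ?_
        · positivity
        · exact mul_le_mul h1 h2 (norm_nonneg _) hMA0.le
        · positivity
        · refine mul_le_mul (mul_le_mul h3 h4 hc2.le (norm_nonneg _)) h5 hc3.le ?_
          positivity

theorem stmt17 (q q1 A B C x y : ℂ)
    (hq0 : 0 < ‖q‖) (hq1 : ‖q‖ < 1)
    (hq10 : 0 < ‖q1‖) (hq11 : ‖q1‖ < 1)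
    (hC : ∀ n : ℕ, qPoch q C n ≠ 0)
    (hx0 : 0 < ‖x‖) (hx : ‖x‖ < 1) (hy : ‖y‖ < 1) :
    (1 - C) * Phi1 q q1 A B C x (x * y) =
      (1 - C) * Phi1 q q1 A B (q * C) x (x * y)
        + (1 - q) * C * x * jackson q (fun t => Phi1 q q1 A B (q * C) t (t * y)) x := by
  have hqn : ‖q‖ < 1 := hq1
  have hq1n : ‖q1‖ < 1 := hq11
  have hxn : ‖x‖ < 1 := hx
  have hyn : ‖y‖ < 1 := hy
  have hxne : x ≠ 0 := by
    intro h; rw [h] at hx0; simp at hx0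
  have hqne1 : (1:ℂ) - q ≠ 0 := by
    intro h
    have : q = 1 := by linear_combination -h
    rw [this] at hqn; norm_num at hqn
  have hqC : ∀ n, qPoch q (q*C) n ≠ 0 := by
    intro n h
    apply hC (n+1)
    rw [qPoch_shift, h, mul_zero]
  have hxy : ‖x * y‖ < 1 := by
    rw [norm_mul]
    calc ‖x‖ * ‖y‖ ≤ ‖x‖ * 1 := mul_le_mul_of_nonneg_left hyn.le (norm_nonneg _)
      _ = ‖x‖ := mul_one _
      _ < 1 := hxn
  have hqx : ‖q * x‖ < 1 := by
    rw [norm_mul]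
    calc ‖q‖ * ‖x‖ ≤ 1 * ‖x‖ := mul_le_mul_of_nonneg_right hqn.le (norm_nonneg _)
      _ = ‖x‖ := one_mul _
      _ < 1 := hxn
  have hqxy : ‖q * x * y‖ < 1 := by
    rw [norm_mul]
    calc ‖q * x‖ * ‖y‖ ≤ ‖q * x‖ * 1 := mul_le_mul_of_nonneg_left hyn.le (norm_nonneg _)
      _ = ‖q * x‖ := mul_one _
      _ < 1 := hqx
  have S2 := phi1_summable q q1 A B (q*C) x (x*y) hqn hq1n hqC hxn hxy
  have S3 := phi1_summable q q1 A B (q*C) (q*x) (q*x*y) hqn hq1n hqC hqx hqxy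
  -- pointwise identity
  have hpt : ∀ p : ℕ × ℕ,
      (1 - C) * (qPoch q A (p.1 + p.2) * qPoch q1 B p.1 /
        (qPoch q C (p.1 + p.2) * qPoch q1 q1 p.1 * qPoch q q p.2) * x ^ p.1 * (x*y) ^ p.2)
      = (1 - C) * (qPoch q A (p.1 + p.2) * qPoch q1 B p.1 /
          (qPoch q (q*C) (p.1 + p.2) * qPoch q1 q1 p.1 * qPoch q q p.2) * x ^ p.1 * (x*y) ^ p.2)
        + (C * (qPoch q A (p.1 + p.2) * qPoch q1 B p.1 /
            (qPoch q (q*C) (p.1 + p.2) * qPoch q1 q1 p.1 * qPoch q q p.2) * x ^ p.1 * (x*y) ^ p.2)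
          - C * (qPoch q A (p.1 + p.2) * qPoch q1 B p.1 /
            (qPoch q (q*C) (p.1 + p.2) * qPoch q1 q1 p.1 * qPoch q q p.2) * (q*x) ^ p.1 * (q*x*y) ^ p.2)) := by
    rintro ⟨l, k⟩
    simp only
    have hPC : qPoch q C (l + k) ≠ 0 := hC _
    have hPQ : qPoch q (q*C) (l + k) ≠ 0 := hqC _
    have hD1 : qPoch q1 q1 l ≠ 0 := qPoch_base_ne_zero hq1n l
    have hD2 : qPoch q q k ≠ 0 := qPoch_base_ne_zero hqn k
    have key : (1 - C) * qPoch q (q*C) (l+k) = qPoch q C (l+k) * (1 - C * q ^ (l+k)) := by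
      rw [← qPoch_shift, qPoch_succ]
    have hcore : (1 - C) / qPoch q C (l+k) = (1 - C * q ^ (l+k)) / qPoch q (q*C) (l+k) := by
      rw [div_eq_div_iff hPC hPQ]; linear_combination key
    linear_combination (qPoch q A (l + k) * qPoch q1 B l /
      (qPoch q1 q1 l * qPoch q q k) * x ^ l * (x*y) ^ k) * hcore
  -- assemble
  have hmain : (1 - C) * Phi1 q q1 A B C x (x * y)
      = (1 - C) * Phi1 q q1 A B (q*C) x (x * y)
        + (C * Phi1 q q1 A B (q*C) x (x * y) - C * Phi1 q q1 A B (q*C) (q*x) (q*x*y)) := by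
    rw [Phi1, Phi1, Phi1, ← tsum_mul_left, ← tsum_mul_left, ← tsum_mul_left, ← tsum_mul_left,
      ← Summable.tsum_sub (S2.mul_left C) (S3.mul_left C),
      ← Summable.tsum_add (S2.mul_left (1-C)) ((S2.mul_left C).sub (S3.mul_left C))]
    exact tsum_congr hpt
  rw [hmain, jackson]
  field_simp
end

section
/- For all parameters A, B, C ∈ ℂ with (C;q)_n ≠ 0 for all n, and all x, y ∈ ℂ with |x| < 1 and |y| < 1, the bibasic Humbert function admits the summation formula Φ₁(A,B;C;q,q₁;x,y) = Σ_{ℓ=0}^∞ [(A;q)_ℓ (B;q₁)_ℓ / ((C;q)_ℓ (q₁;q₁)_ℓ)] x^ℓ · Σ_{k=0}^∞ [(q^ℓ A;q)_k / ((q^ℓ C;q)_k (q;q)_k)] y^k, where the inner sum is the basic hypergeometric series ₂Φ₁(q^ℓ A, 0; q^ℓ C; q, y) and all series converge absolutely. (Equation (2.27).) -/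
open Complex

lemma qPoch_split (q z : ℂ) (m n : ℕ) :
    qPoch q z (m + n) = qPoch q z m * qPoch q (q ^ m * z) n := by
  unfold qPoch
  rw [Finset.prod_range_add]
  congr 1
  refine Finset.prod_congr rfl fun i _ => ?_
  rw [pow_add]; ring

lemma norm_qPoch_le (q z : ℂ) (hq : ‖q‖ < 1) (n : ℕ) :
    ‖qPoch q z n‖ ≤ Real.exp (‖z‖ * (1 - ‖q‖)⁻¹) := by
  have hq0 : (0:ℝ) ≤ ‖q‖ := norm_nonneg q
  unfold qPoch
  rw [norm_prod]
  calc ∏ r ∈ Finset.range n, ‖1 - z * q ^ r‖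
      ≤ ∏ r ∈ Finset.range n, Real.exp (‖z‖ * ‖q‖ ^ r) := by
        refine Finset.prod_le_prod (fun r _ => norm_nonneg _) (fun r _ => ?_)
        calc ‖1 - z * q ^ r‖ ≤ ‖(1:ℂ)‖ + ‖z * q ^ r‖ := by
              simpa using norm_sub_le (1:ℂ) (z * q ^ r)
          _ = ‖z‖ * ‖q‖ ^ r + 1 := by
              simp [norm_mul, norm_pow]; ring
          _ ≤ Real.exp (‖z‖ * ‖q‖ ^ r) := Real.add_one_le_exp _
    _ = Real.exp (∑ r ∈ Finset.range n, ‖z‖ * ‖q‖ ^ r) := (Real.exp_sum _ _).symm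
    _ ≤ Real.exp (‖z‖ * (1 - ‖q‖)⁻¹) := by
        apply Real.exp_le_exp.2
        rw [← Finset.mul_sum]
        refine mul_le_mul_of_nonneg_left ?_ (norm_nonneg z)
        calc ∑ r ∈ Finset.range n, ‖q‖ ^ r
            ≤ ∑' r : ℕ, ‖q‖ ^ r :=
              Summable.sum_le_tsum _ (fun i _ => pow_nonneg hq0 i)
                (summable_geometric_of_lt_one hq0 hq)
          _ = (1 - ‖q‖)⁻¹ := tsum_geometric_of_lt_one hq0 hq

lemma prod_one_sub_ge (a : ℕ → ℝ) (ha : ∀ i, 0 ≤ a i) (ha1 : ∀ i, a i ≤ 1) (n : ℕ) :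
    1 - ∑ i ∈ Finset.range n, a i ≤ ∏ i ∈ Finset.range n, (1 - a i) := by
  induction n with
  | zero => simp
  | succ n ih =>
    rw [Finset.sum_range_succ, Finset.prod_range_succ]
    have hS : (0:ℝ) ≤ ∑ i ∈ Finset.range n, a i :=
      Finset.sum_nonneg fun i _ => ha i
    have h1 : (0:ℝ) ≤ 1 - a n := by linarith [ha1 n]
    nlinarith [mul_le_mul_of_nonneg_right ih h1, mul_nonneg hS (ha n)]

lemma qPoch_lower_s19 (q z : ℂ) (hq : ‖q‖ < 1)
    (hnz : ∀ n, qPoch q z n ≠ 0) :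
    ∃ c > 0, ∀ n, c ≤ ‖qPoch q z n‖ := by
  have hq0 : (0:ℝ) ≤ ‖q‖ := norm_nonneg q
  -- choose N with |z| * |q|^N * (1-|q|)⁻¹ ≤ 1/2
  have htend : Filter.Tendsto (fun n : ℕ => ‖z‖ * ‖q‖ ^ n * (1 - ‖q‖)⁻¹)
      Filter.atTop (nhds 0) := by
    have := tendsto_pow_atTop_nhds_zero_of_lt_one hq0 hq
    simpa using ((this.const_mul (‖z‖)).mul_const (1 - ‖q‖)⁻¹)
  obtain ⟨N, hN⟩ := (htend.eventually (gt_mem_nhds (by norm_num : (0:ℝ) < 1/2))).exists_forall_of_atTop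
  -- tail bound
  have hzq : ‖z‖ * ‖q‖ ^ N * (1 - ‖q‖)⁻¹ < 1/2 := hN N le_rfl
  have hinv1 : (1:ℝ) ≤ (1 - ‖q‖)⁻¹ := by
    rw [le_inv_comm₀] <;> [skip; norm_num; linarith]
    · linarith
  have htail : ∀ m : ℕ, (1:ℝ)/2 ≤ ‖qPoch q (q ^ N * z) m‖ := by
    intro m
    set a : ℕ → ℝ := fun i => ‖z‖ * ‖q‖ ^ (N + i) with ha_def
    have ha0 : ∀ i, 0 ≤ a i := fun i =>
      mul_nonneg (norm_nonneg z) (pow_nonneg hq0 _)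
    have haN : ∀ i, a i ≤ ‖z‖ * ‖q‖ ^ N := by
      intro i
      refine mul_le_mul_of_nonneg_left ?_ (norm_nonneg z)
      exact pow_le_pow_of_le_one hq0 hq.le (Nat.le_add_right N i)
    have hlt : ‖z‖ * ‖q‖ ^ N < 1/2 := by
      calc ‖z‖ * ‖q‖ ^ N
          ≤ ‖z‖ * ‖q‖ ^ N * (1 - ‖q‖)⁻¹ := by
            nlinarith [mul_nonneg (norm_nonneg z) (pow_nonneg hq0 N)]
        _ < 1/2 := hzq
    have ha1 : ∀ i, a i ≤ 1 := fun i => le_trans (haN i) (by linarith)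
    have hsum : ∑ i ∈ Finset.range m, a i ≤ 1/2 := by
      have : ∑ i ∈ Finset.range m, a i
          = ‖z‖ * ‖q‖ ^ N * ∑ i ∈ Finset.range m, ‖q‖ ^ i := by
        rw [Finset.mul_sum]
        refine Finset.sum_congr rfl fun i _ => ?_
        show ‖z‖ * ‖q‖ ^ (N + i) = _
        rw [pow_add]; ring
      rw [this]
      calc ‖z‖ * ‖q‖ ^ N * ∑ i ∈ Finset.range m, ‖q‖ ^ i
          ≤ ‖z‖ * ‖q‖ ^ N * (1 - ‖q‖)⁻¹ := by
            refine mul_le_mul_of_nonneg_left ?_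
              (mul_nonneg (norm_nonneg z) (pow_nonneg hq0 N))
            calc ∑ i ∈ Finset.range m, ‖q‖ ^ i
                ≤ ∑' i : ℕ, ‖q‖ ^ i :=
                  Summable.sum_le_tsum _ (fun i _ => pow_nonneg hq0 i)
                    (summable_geometric_of_lt_one hq0 hq)
              _ = (1 - ‖q‖)⁻¹ := tsum_geometric_of_lt_one hq0 hq
        _ ≤ 1/2 := hzq.le
    calc (1:ℝ)/2 ≤ 1 - ∑ i ∈ Finset.range m, a i := by linarith
      _ ≤ ∏ i ∈ Finset.range m, (1 - a i) := prod_one_sub_ge a ha0 ha1 m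
      _ ≤ ∏ i ∈ Finset.range m, ‖1 - q ^ N * z * q ^ i‖ := by
          refine Finset.prod_le_prod (fun i _ => by linarith [ha1 i]) (fun i _ => ?_)
          have : ‖q ^ N * z * q ^ i‖ = a i := by
            simp [ha_def, norm_mul, norm_pow, pow_add]; ring
          calc 1 - a i = ‖(1:ℂ)‖ - ‖q ^ N * z * q ^ i‖ := by
                rw [this]; simp
            _ ≤ ‖1 - q ^ N * z * q ^ i‖ := by
                simpa using norm_sub_norm_le (1:ℂ) (q ^ N * z * q ^ i)
      _ = ‖qPoch q (q ^ N * z) m‖ := by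
          unfold qPoch; rw [norm_prod]
  -- min over first N+1 values
  have hne : (Finset.range (N + 1)).Nonempty := ⟨0, by simp⟩
  set c0 := (Finset.range (N + 1)).inf' hne (fun n => ‖qPoch q z n‖) with hc0
  have hc0pos : 0 < c0 := by
    rw [hc0, Finset.lt_inf'_iff]
    exact fun i _ => norm_pos_iff.2 (hnz i)
  refine ⟨c0 / 2, by positivity, fun n => ?_⟩
  rcases le_or_gt n N with h | h
  · have : c0 ≤ ‖qPoch q z n‖ :=
      Finset.inf'_le _ (Finset.mem_range.2 (Nat.lt_succ_of_le h))
    linarith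
  · obtain ⟨m, rfl⟩ : ∃ m, n = N + m := ⟨n - N, by omega⟩
    rw [qPoch_split, norm_mul]
    have h1 : c0 ≤ ‖qPoch q z N‖ :=
      Finset.inf'_le _ (Finset.mem_range.2 (Nat.lt_succ_self N))
    calc c0 / 2 = c0 * (1/2) := by ring
      _ ≤ ‖qPoch q z N‖ * ‖qPoch q (q ^ N * z) m‖ :=
        mul_le_mul h1 (htail m) (by norm_num) (norm_nonneg _)

lemma qPoch_self_ne_zero (q : ℂ) (hq : ‖q‖ < 1) (n : ℕ) : qPoch q q n ≠ 0 := by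
  unfold qPoch
  rw [Finset.prod_ne_zero_iff]
  intro r _ h
  have h1 : q * q ^ r = 1 := by rwa [sub_eq_zero, eq_comm] at h
  have h2 : ‖q * q ^ r‖ = 1 := by rw [h1]; simp
  have h3 : ‖q * q ^ r‖ < 1 := by
    rw [norm_mul, norm_pow]
    calc ‖q‖ * ‖q‖ ^ r ≤ ‖q‖ * 1 :=
        mul_le_mul_of_nonneg_left (pow_le_one₀ (norm_nonneg q) hq.le) (norm_nonneg q)
      _ < 1 := by simpa using hq
  linarith

theorem stmt19 (q q1 A B C x y : ℂ)
    (hq0 : 0 < ‖q‖) (hq1 : ‖q‖ < 1)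
    (hq10 : 0 < ‖q1‖) (hq11 : ‖q1‖ < 1)
    (hC : ∀ n : ℕ, qPoch q C n ≠ 0)
    (hx : ‖x‖ < 1) (hy : ‖y‖ < 1) :
    (∀ ℓ : ℕ, Summable (fun k : ℕ =>
        qPoch q (q ^ ℓ * A) k / (qPoch q (q ^ ℓ * C) k * qPoch q q k) * y ^ k)) ∧
    Summable (fun ℓ : ℕ =>
        qPoch q A ℓ * qPoch q1 B ℓ / (qPoch q C ℓ * qPoch q1 q1 ℓ) * x ^ ℓ *
          ∑' k : ℕ,
            qPoch q (q ^ ℓ * A) k / (qPoch q (q ^ ℓ * C) k * qPoch q q k) * y ^ k) ∧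
    Phi1 q q1 A B C x y =
      ∑' ℓ : ℕ,
        qPoch q A ℓ * qPoch q1 B ℓ / (qPoch q C ℓ * qPoch q1 q1 ℓ) * x ^ ℓ *
          ∑' k : ℕ,
            qPoch q (q ^ ℓ * A) k / (qPoch q (q ^ ℓ * C) k * qPoch q q k) * y ^ k := by
  have hxy0 : (0:ℝ) ≤ ‖x‖ := norm_nonneg x
  have hyy0 : (0:ℝ) ≤ ‖y‖ := norm_nonneg y
  obtain ⟨cC, hcC0, hcC⟩ := qPoch_lower_s19 q C hq1 hC
  obtain ⟨cq, hcq0, hcq⟩ := qPoch_lower_s19 q q hq1 (qPoch_self_ne_zero q hq1)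
  obtain ⟨c1, hc10, hc1⟩ := qPoch_lower_s19 q1 q1 hq11 (qPoch_self_ne_zero q1 hq11)
  set MA := Real.exp (‖A‖ * (1 - ‖q‖)⁻¹) with hMA
  set MB := Real.exp (‖B‖ * (1 - ‖q1‖)⁻¹) with hMB
  set MC := Real.exp (‖C‖ * (1 - ‖q‖)⁻¹) with hMC
  have hMA0 : 0 < MA := Real.exp_pos _
  have hMB0 : 0 < MB := Real.exp_pos _
  have hMC0 : 0 < MC := Real.exp_pos _
  -- uniform bounds for shifted Pochhammers
  have hAbound : ∀ ℓ k : ℕ, ‖qPoch q (q ^ ℓ * A) k‖ ≤ MA := by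
    intro ℓ k
    refine le_trans (norm_qPoch_le q _ hq1 k) (Real.exp_le_exp.2 ?_)
    have hinv : (0:ℝ) ≤ (1 - ‖q‖)⁻¹ := by
      rw [inv_nonneg]; linarith
    refine mul_le_mul_of_nonneg_right ?_ hinv
    rw [norm_mul, norm_pow]
    calc ‖q‖ ^ ℓ * ‖A‖ ≤ 1 * ‖A‖ :=
        mul_le_mul_of_nonneg_right (pow_le_one₀ (norm_nonneg q) hq1.le) (norm_nonneg A)
      _ = ‖A‖ := one_mul _
  have hAbound' : ∀ n : ℕ, ‖qPoch q A n‖ ≤ MA := fun n => by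
    simpa using hAbound 0 n
  have hBbound : ∀ n : ℕ, ‖qPoch q1 B n‖ ≤ MB := fun n => norm_qPoch_le q1 B hq11 n
  have hCbound : ∀ n : ℕ, ‖qPoch q C n‖ ≤ MC := fun n => norm_qPoch_le q C hq1 n
  -- lower bound for the shifted C Pochhammer
  have hClow : ∀ ℓ k : ℕ, cC / MC ≤ ‖qPoch q (q ^ ℓ * C) k‖ := by
    intro ℓ k
    have hsplit : ‖qPoch q C (ℓ + k)‖
        = ‖qPoch q C ℓ‖ * ‖qPoch q (q ^ ℓ * C) k‖ := by
      rw [qPoch_split, norm_mul]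
    have h1 : cC ≤ MC * ‖qPoch q (q ^ ℓ * C) k‖ := by
      calc cC ≤ ‖qPoch q C (ℓ + k)‖ := hcC _
        _ = ‖qPoch q C ℓ‖ * ‖qPoch q (q ^ ℓ * C) k‖ := hsplit
        _ ≤ MC * ‖qPoch q (q ^ ℓ * C) k‖ :=
          mul_le_mul_of_nonneg_right (hCbound ℓ) (norm_nonneg _)
    rw [div_le_iff₀ hMC0, mul_comm]
    exact h1
  have hCMpos : 0 < cC / MC := div_pos hcC0 hMC0
  -- bound for the inner summand
  have hgbd : ∀ ℓ k : ℕ,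
      ‖qPoch q (q ^ ℓ * A) k / (qPoch q (q ^ ℓ * C) k * qPoch q q k) * y ^ k‖
        ≤ MA / (cC / MC * cq) * ‖y‖ ^ k := by
    intro ℓ k
    rw [norm_mul, norm_div, norm_mul, norm_pow]
    refine mul_le_mul_of_nonneg_right ?_ (pow_nonneg hyy0 k)
    have hden : cC / MC * cq ≤ ‖qPoch q (q ^ ℓ * C) k‖ * ‖qPoch q q k‖ :=
      mul_le_mul (hClow ℓ k) (hcq k) hcq0.le (norm_nonneg _)
    exact div_le_div₀ hMA0.le (hAbound ℓ k) (mul_pos hCMpos hcq0) hden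
  -- Part 1
  have part1 : ∀ ℓ : ℕ, Summable (fun k : ℕ =>
      qPoch q (q ^ ℓ * A) k / (qPoch q (q ^ ℓ * C) k * qPoch q q k) * y ^ k) := by
    intro ℓ
    refine Summable.of_norm (Summable.of_nonneg_of_le (fun k => norm_nonneg _)
      (fun k => ?_) (((summable_geometric_of_lt_one hyy0 hy)).mul_left (MA / (cC / MC * cq))))
    simpa using hgbd ℓ k
  -- the double-indexed term
  set F : ℕ × ℕ → ℂ := fun p =>
    qPoch q A (p.1 + p.2) * qPoch q1 B p.1 /
      (qPoch q C (p.1 + p.2) * qPoch q1 q1 p.1 * qPoch q q p.2) * x ^ p.1 * y ^ p.2 with hF_def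
  have hFbd : ∀ p : ℕ × ℕ, ‖F p‖
      ≤ MA * MB / (cC * c1 * cq) * (‖x‖ ^ p.1 * ‖y‖ ^ p.2) := by
    intro ⟨ℓ, k⟩
    rw [hF_def]
    simp only [norm_mul, norm_div, norm_pow]
    have hfrac : ‖qPoch q A (ℓ + k)‖ * ‖qPoch q1 B ℓ‖ /
        (‖qPoch q C (ℓ + k)‖ * ‖qPoch q1 q1 ℓ‖ * ‖qPoch q q k‖)
        ≤ MA * MB / (cC * c1 * cq) := by
      refine div_le_div₀ (mul_pos hMA0 hMB0).le
        (mul_le_mul (hAbound' _) (hBbound _) (norm_nonneg _) hMA0.le)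
        (by positivity) ?_
      exact mul_le_mul (mul_le_mul (hcC _) (hc1 _) hc10.le (norm_nonneg _)) (hcq _)
        hcq0.le (mul_nonneg (norm_nonneg _) (norm_nonneg _))
    calc ‖qPoch q A (ℓ + k)‖ * ‖qPoch q1 B ℓ‖ /
          (‖qPoch q C (ℓ + k)‖ * ‖qPoch q1 q1 ℓ‖ *
            ‖qPoch q q k‖) * ‖x‖ ^ ℓ * ‖y‖ ^ k
        = ‖qPoch q A (ℓ + k)‖ * ‖qPoch q1 B ℓ‖ /
          (‖qPoch q C (ℓ + k)‖ * ‖qPoch q1 q1 ℓ‖ *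
            ‖qPoch q q k‖) * (‖x‖ ^ ℓ * ‖y‖ ^ k) := by ring
      _ ≤ MA * MB / (cC * c1 * cq) * (‖x‖ ^ ℓ * ‖y‖ ^ k) :=
          mul_le_mul_of_nonneg_right hfrac (by positivity)
  have hFsum : Summable F := by
    refine Summable.of_norm (Summable.of_nonneg_of_le (fun p => norm_nonneg _) (fun p => ?_)
      (((summable_geometric_of_lt_one hxy0 hx).mul_of_nonneg (summable_geometric_of_lt_one hyy0 hy)
        (fun _ => pow_nonneg hxy0 _) (fun _ => pow_nonneg hyy0 _)).mul_left
          (MA * MB / (cC * c1 * cq))))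
    simpa using hFbd p
  have hfact : ∀ ℓ k : ℕ, F (ℓ, k) =
      (qPoch q A ℓ * qPoch q1 B ℓ / (qPoch q C ℓ * qPoch q1 q1 ℓ) * x ^ ℓ) *
        (qPoch q (q ^ ℓ * A) k / (qPoch q (q ^ ℓ * C) k * qPoch q q k) * y ^ k) := by
    intro ℓ k
    rw [hF_def]
    simp only
    rw [qPoch_split q A ℓ k, qPoch_split q C ℓ k]
    simp only [div_eq_mul_inv, mul_inv]
    ring
  have hrow : ∀ ℓ : ℕ, Summable (fun k => F (ℓ, k)) := fun ℓ =>
    ((part1 ℓ).mul_left _).congr fun k => (hfact ℓ k).symm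
  have hcol : Summable (fun ℓ => ∑' k, F (ℓ, k)) :=
    ⟨_, hFsum.hasSum.prod_fiberwise fun ℓ => (hrow ℓ).hasSum⟩
  have hsumeq : ∀ ℓ : ℕ, ∑' k, F (ℓ, k) =
      qPoch q A ℓ * qPoch q1 B ℓ / (qPoch q C ℓ * qPoch q1 q1 ℓ) * x ^ ℓ *
        ∑' k, qPoch q (q ^ ℓ * A) k / (qPoch q (q ^ ℓ * C) k * qPoch q q k) * y ^ k := by
    intro ℓ
    rw [← tsum_mul_left]
    exact tsum_congr fun k => hfact ℓ k
  refine ⟨part1, hcol.congr hsumeq, ?_⟩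
  have hPhi : Phi1 q q1 A B C x y = ∑' p : ℕ × ℕ, F p := by rw [hF_def]; rfl
  rw [hPhi, Summable.tsum_prod' hFsum hrow]
  exact tsum_congr hsumeq
end
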